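/- Let Λ be a type, n : ℕ, ψ : Fin n → Λ → ℂ, and fix i j : Fin n with i ≠ j. Assume (i) the family ψ is linearly independent, and (ii) the pairwise product functions ψ a · ψ b : Λ → ℂ, indexed by unordered pairs {a, b} with a ≠ b, form a linearly independent family. Let c : Equiv.Perm (Fin n) → ℂ and define Ψ : (Fin n → Λ) → ℂ by Ψ(λ) = Σ_{σ} c σ · ∏_{k} ψ k (λ (σ k)). If Ψ(λ) = 0 for every λ with λ i = λ j, then c (Equiv.swap i j * σ) = − c σ for every permutation σ. -/

import Mathlib

open Finset

lemma lemA {Λ ι : Type*} [Fintype ι] [DecidableEq ι] [Nonempty Λ] (ψ : ι → Λ → ℂ)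
    (h1 : LinearIndependent ℂ ψ) (S : Finset ι) :
    ∀ {L : Type*} [Fintype L] (b : L → ℂ) (g : L → ι → ι),
      (∀ y : ι → Λ, ∑ l, b l * ∏ m ∈ S, ψ (g l m) (y m) = 0) →
      ∀ l0 : L, ∑ l ∈ univ.filter (fun l => ∀ m ∈ S, g l m = g l0 m), b l = 0 := by
  classical
  induction S using Finset.induction_on with
  | empty =>
      intro L _ b g h l0
      simpa using h (fun _ => Classical.arbitrary Λ)
  | @insert a S ha ih =>
      intro L _ b g h l0
      have ht : ∀ (y : ι → Λ) (t : Λ),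
          ∑ l, (b l * ∏ m ∈ S, ψ (g l m) (y m)) * ψ (g l a) t = 0 := by
        intro y t
        have h0 := h (Function.update y a t)
        calc ∑ l, (b l * ∏ m ∈ S, ψ (g l m) (y m)) * ψ (g l a) t
            = ∑ l, b l * ∏ m ∈ insert a S, ψ (g l m) (Function.update y a t m) := by
              refine Finset.sum_congr rfl fun l _ => ?_
              rw [Finset.prod_insert ha, Function.update_self]
              have hrest : ∏ m ∈ S, ψ (g l m) (Function.update y a t m)
                  = ∏ m ∈ S, ψ (g l m) (y m) := by
                refine Finset.prod_congr rfl fun m hm => ?_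
                rw [Function.update_of_ne (by rintro rfl; exact ha hm)]
              rw [hrest]; ring
          _ = 0 := h0
      have key : ∀ (k : ι) (y : ι → Λ),
          ∑ l ∈ univ.filter (fun l => g l a = k),
            b l * ∏ m ∈ S, ψ (g l m) (y m) = 0 := by
        intro k y
        have hz : (∑ k : ι, (∑ l ∈ univ.filter (fun l => g l a = k),
            b l * ∏ m ∈ S, ψ (g l m) (y m)) • ψ k) = 0 := by
          funext t
          simp only [Finset.sum_apply, Pi.smul_apply, smul_eq_mul, Pi.zero_apply]
          have hk : ∀ k : ι,
              (∑ l ∈ univ.filter (fun l => g l a = k), b l * ∏ m ∈ S, ψ (g l m) (y m)) * ψ k t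
              = ∑ l ∈ univ.filter (fun l => g l a = k),
                  (b l * ∏ m ∈ S, ψ (g l m) (y m)) * ψ (g l a) t := by
            intro k
            rw [Finset.sum_mul]
            exact Finset.sum_congr rfl fun l hl => by
              rw [(Finset.mem_filter.mp hl).2]
          rw [Finset.sum_congr rfl (fun k _ => hk k), Finset.sum_fiberwise]
          exact ht y t
        exact Fintype.linearIndependent_iff.mp h1 _ hz k
      have hyp : ∀ y : ι → Λ,
          ∑ l, (if g l a = g l0 a then b l else 0) * ∏ m ∈ S, ψ (g l m) (y m) = 0 := by
        intro y
        calc ∑ l, (if g l a = g l0 a then b l else 0) * ∏ m ∈ S, ψ (g l m) (y m)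
            = ∑ l, (if g l a = g l0 a then b l * ∏ m ∈ S, ψ (g l m) (y m) else 0) :=
              Finset.sum_congr rfl fun l _ => by split_ifs <;> simp
          _ = 0 := by rw [← Finset.sum_filter]; exact key (g l0 a) y
      have hfin := ih (fun l => if g l a = g l0 a then b l else 0) g hyp l0
      have heq : ∑ l ∈ univ.filter (fun l => ∀ m ∈ insert a S, g l m = g l0 m), b l
          = ∑ l ∈ univ.filter (fun l => ∀ m ∈ S, g l m = g l0 m),
              (if g l a = g l0 a then b l else 0) := by
        rw [Finset.sum_filter, Finset.sum_filter]
        refine Finset.sum_congr rfl fun l _ => ?_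
        by_cases hA : g l a = g l0 a <;> by_cases hB : ∀ m ∈ S, g l m = g l0 m <;>
          simp [hA, hB, Finset.forall_mem_insert]
      rw [heq]; exact hfin

/-- The coefficient relation from the Appendix proof of Theorem 2: if the
permutation-product state `Ψ` vanishes on the partial diagonal `λ i = λ j` for a
spin-coupled pair `i ≠ j`, then `c (swap i j * σ) = − c σ` for every permutation. -/
theorem coupled_pair_coefficient_relation {Λ : Type*} (n : ℕ) (ψ : Fin n → Λ → ℂ)
    (i j : Fin n) (hij : i ≠ j)
    (h1 : LinearIndependent ℂ ψ)
    (h2 : LinearIndependent ℂ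
      (fun p : {p : Fin n × Fin n // p.1 < p.2} => ψ p.1.1 * ψ p.1.2))
    (c : Equiv.Perm (Fin n) → ℂ)
    (Ψ : (Fin n → Λ) → ℂ)
    (hΨ : ∀ lam : Fin n → Λ,
      Ψ lam = ∑ σ : Equiv.Perm (Fin n), c σ * ∏ k : Fin n, ψ k (lam (σ k)))
    (hvanish : ∀ lam : Fin n → Λ, lam i = lam j → Ψ lam = 0) :
    ∀ σ : Equiv.Perm (Fin n), c (Equiv.swap i j * σ) = - c σ := by
  classical
  have hΛ : Nonempty Λ := by
    by_contra h
    rw [not_nonempty_iff] at h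
    exact h1.ne_zero i (funext fun x => h.elim x)
  have hne : ∀ σ : Equiv.Perm (Fin n), σ⁻¹ i ≠ σ⁻¹ j :=
    fun σ h => hij (Equiv.injective σ⁻¹ h)
  obtain ⟨pr, hpr⟩ : ∃ pr : Equiv.Perm (Fin n) → {p : Fin n × Fin n // p.1 < p.2},
      ∀ σ, ((pr σ).1.1 = σ⁻¹ i ∧ (pr σ).1.2 = σ⁻¹ j) ∨
           ((pr σ).1.1 = σ⁻¹ j ∧ (pr σ).1.2 = σ⁻¹ i) := by
    refine ⟨fun σ => if h : σ⁻¹ i < σ⁻¹ j then ⟨(σ⁻¹ i, σ⁻¹ j), h⟩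
      else ⟨(σ⁻¹ j, σ⁻¹ i), (not_lt.1 h).lt_of_ne (hne σ).symm⟩, fun σ => ?_⟩
    dsimp only
    by_cases h : σ⁻¹ i < σ⁻¹ j
    · rw [dif_pos h]; exact Or.inl ⟨rfl, rfl⟩
    · rw [dif_neg h]; exact Or.inr ⟨rfl, rfl⟩
  have prmul : ∀ (σ : Equiv.Perm (Fin n)) (x : Λ),
      (ψ (pr σ).1.1 * ψ (pr σ).1.2) x = ψ (σ⁻¹ i) x * ψ (σ⁻¹ j) x := by
    intro σ x
    rcases hpr σ with ⟨a1, a2⟩ | ⟨a1, a2⟩ <;> rw [Pi.mul_apply, a1, a2]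
    ring
  have prinj : ∀ σ τ : Equiv.Perm (Fin n), pr σ = pr τ →
      (σ⁻¹ i = τ⁻¹ i ∧ σ⁻¹ j = τ⁻¹ j) ∨ (σ⁻¹ i = τ⁻¹ j ∧ σ⁻¹ j = τ⁻¹ i) := by
    intro σ τ h
    have e1 : (pr σ).1.1 = (pr τ).1.1 := by rw [h]
    have e2 : (pr σ).1.2 = (pr τ).1.2 := by rw [h]
    rcases hpr σ with ⟨a1, a2⟩ | ⟨a1, a2⟩ <;> rcases hpr τ with ⟨b1, b2⟩ | ⟨b1, b2⟩
    · exact Or.inl ⟨(a1.symm.trans e1).trans b1, (a2.symm.trans e2).trans b2⟩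
    · exact Or.inr ⟨(a1.symm.trans e1).trans b1, (a2.symm.trans e2).trans b2⟩
    · exact Or.inr ⟨(a2.symm.trans e2).trans b2, (a1.symm.trans e1).trans b1⟩
    · exact Or.inl ⟨(a2.symm.trans e2).trans b2, (a1.symm.trans e1).trans b1⟩
  have prswap : ∀ σ τ : Equiv.Perm (Fin n),
      σ⁻¹ i = τ⁻¹ j → σ⁻¹ j = τ⁻¹ i → pr σ = pr τ := by
    intro σ τ e1 e2
    have l1 := (pr σ).2
    have l2 := (pr τ).2
    apply Subtype.ext
    rcases hpr σ with ⟨a1, a2⟩ | ⟨a1, a2⟩ <;> rcases hpr τ with ⟨b1, b2⟩ | ⟨b1, b2⟩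
    · exfalso
      rw [a1, a2, e1, e2] at l1
      rw [b1, b2] at l2
      exact absurd l1 (asymm l2)
    · exact Prod.ext (by rw [a1, b1, e1]) (by rw [a2, b2, e2])
    · exact Prod.ext (by rw [a1, b1, e2]) (by rw [a2, b2, e1])
    · exfalso
      rw [a1, a2, e1, e2] at l1
      rw [b1, b2] at l2
      exact absurd l1 (asymm l2)
  have step0 : ∀ y : Fin n → Λ,
      ∑ σ : Equiv.Perm (Fin n), c σ *
        ((ψ (pr σ).1.1 * ψ (pr σ).1.2) (y i) *
          ∏ m ∈ univ \ ({i, j} : Finset (Fin n)), ψ (σ⁻¹ m) (y m)) = 0 := by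
    intro y
    have h0 := hvanish (fun m => y (if m = j then i else m)) (by simp [hij])
    rw [hΨ] at h0
    rw [← h0]
    refine Finset.sum_congr rfl fun σ _ => ?_
    congr 1
    have hre : ∏ k : Fin n, ψ k ((fun m => y (if m = j then i else m)) (σ k))
        = ∏ m : Fin n, ψ (σ⁻¹ m) (y (if m = j then i else m)) := by
      rw [← Equiv.prod_comp σ (fun m => ψ (σ⁻¹ m) (y (if m = j then i else m)))]
      exact Finset.prod_congr rfl fun k _ => by simp
    rw [hre, ← Finset.prod_sdiff (Finset.subset_univ ({i, j} : Finset (Fin n))),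
      Finset.prod_pair hij]
    have hP : ∏ m ∈ univ \ ({i, j} : Finset (Fin n)),
        ψ (σ⁻¹ m) (y (if m = j then i else m))
        = ∏ m ∈ univ \ ({i, j} : Finset (Fin n)), ψ (σ⁻¹ m) (y m) := by
      refine Finset.prod_congr rfl fun m hm => ?_
      rw [Finset.mem_sdiff, Finset.mem_insert, Finset.mem_singleton] at hm
      rw [if_neg (by tauto)]
    rw [hP, prmul σ (y i), if_neg hij, if_pos rfl]
    ring
  -- peel the coupled slot i using h2
  have peel1 : ∀ (p : {p : Fin n × Fin n // p.1 < p.2}) (y : Fin n → Λ),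
      ∑ σ ∈ univ.filter (fun σ : Equiv.Perm (Fin n) => pr σ = p),
        c σ * ∏ m ∈ univ \ ({i, j} : Finset (Fin n)), ψ (σ⁻¹ m) (y m) = 0 := by
    intro p y
    have ht : ∀ t : Λ,
        ∑ σ : Equiv.Perm (Fin n),
          (c σ * ∏ m ∈ univ \ ({i, j} : Finset (Fin n)), ψ (σ⁻¹ m) (y m)) *
            (ψ (pr σ).1.1 * ψ (pr σ).1.2) t = 0 := by
      intro t
      have h0 := step0 (Function.update y i t)
      calc ∑ σ : Equiv.Perm (Fin n),
            (c σ * ∏ m ∈ univ \ ({i, j} : Finset (Fin n)), ψ (σ⁻¹ m) (y m)) *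
              (ψ (pr σ).1.1 * ψ (pr σ).1.2) t
          = ∑ σ : Equiv.Perm (Fin n), c σ *
              ((ψ (pr σ).1.1 * ψ (pr σ).1.2) (Function.update y i t i) *
                ∏ m ∈ univ \ ({i, j} : Finset (Fin n)),
                  ψ (σ⁻¹ m) (Function.update y i t m)) := by
            refine Finset.sum_congr rfl fun σ _ => ?_
            rw [Function.update_self]
            have hrest : ∏ m ∈ univ \ ({i, j} : Finset (Fin n)),
                ψ (σ⁻¹ m) (Function.update y i t m)
                = ∏ m ∈ univ \ ({i, j} : Finset (Fin n)), ψ (σ⁻¹ m) (y m) := by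
              refine Finset.prod_congr rfl fun m hm => ?_
              rw [Finset.mem_sdiff, Finset.mem_insert, Finset.mem_singleton] at hm
              rw [Function.update_of_ne (by tauto)]
            rw [hrest]; ring
        _ = 0 := h0
    have hz : (∑ q : {p : Fin n × Fin n // p.1 < p.2},
        (∑ σ ∈ univ.filter (fun σ : Equiv.Perm (Fin n) => pr σ = q),
          c σ * ∏ m ∈ univ \ ({i, j} : Finset (Fin n)), ψ (σ⁻¹ m) (y m)) •
            (ψ q.1.1 * ψ q.1.2)) = 0 := by
      funext t
      simp only [Finset.sum_apply, Pi.smul_apply, smul_eq_mul, Pi.zero_apply]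
      have hq : ∀ q : {p : Fin n × Fin n // p.1 < p.2},
          (∑ σ ∈ univ.filter (fun σ : Equiv.Perm (Fin n) => pr σ = q),
            c σ * ∏ m ∈ univ \ ({i, j} : Finset (Fin n)), ψ (σ⁻¹ m) (y m)) *
              (ψ q.1.1 * ψ q.1.2) t
          = ∑ σ ∈ univ.filter (fun σ : Equiv.Perm (Fin n) => pr σ = q),
              (c σ * ∏ m ∈ univ \ ({i, j} : Finset (Fin n)), ψ (σ⁻¹ m) (y m)) *
                (ψ (pr σ).1.1 * ψ (pr σ).1.2) t := by
        intro q
        rw [Finset.sum_mul]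
        exact Finset.sum_congr rfl fun σ hσ => by
          rw [(Finset.mem_filter.mp hσ).2]
      rw [Finset.sum_congr rfl (fun q _ => hq q), Finset.sum_fiberwise]
      exact ht t
    exact Fintype.linearIndependent_iff.mp h2 _ hz p
  -- apply lemA
  intro σ0
  have hyp : ∀ y : Fin n → Λ,
      ∑ σ : Equiv.Perm (Fin n), (if pr σ = pr σ0 then c σ else 0) *
        ∏ m ∈ univ \ ({i, j} : Finset (Fin n)), ψ (σ⁻¹ m) (y m) = 0 := by
    intro y
    calc ∑ σ : Equiv.Perm (Fin n), (if pr σ = pr σ0 then c σ else 0) *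
          ∏ m ∈ univ \ ({i, j} : Finset (Fin n)), ψ (σ⁻¹ m) (y m)
        = ∑ σ : Equiv.Perm (Fin n), (if pr σ = pr σ0 then
            c σ * ∏ m ∈ univ \ ({i, j} : Finset (Fin n)), ψ (σ⁻¹ m) (y m) else 0) :=
          Finset.sum_congr rfl fun σ _ => by split_ifs <;> simp
      _ = 0 := by rw [← Finset.sum_filter]; exact peel1 (pr σ0) y
  have hA := lemA ψ h1 (univ \ ({i, j} : Finset (Fin n)))
    (fun σ : Equiv.Perm (Fin n) => if pr σ = pr σ0 then c σ else 0)
    (fun σ m => σ⁻¹ m) hyp σ0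
  have heq : ∑ σ ∈ univ.filter (fun σ : Equiv.Perm (Fin n) =>
        ∀ m ∈ univ \ ({i, j} : Finset (Fin n)), σ⁻¹ m = σ0⁻¹ m),
        (if pr σ = pr σ0 then c σ else 0)
      = ∑ σ ∈ univ.filter (fun σ : Equiv.Perm (Fin n) =>
          (∀ m ∈ univ \ ({i, j} : Finset (Fin n)), σ⁻¹ m = σ0⁻¹ m) ∧ pr σ = pr σ0),
          c σ := by
    rw [Finset.sum_filter, Finset.sum_filter]
    refine Finset.sum_congr rfl fun σ _ => ?_
    by_cases hA1 : ∀ m ∈ univ \ ({i, j} : Finset (Fin n)), σ⁻¹ m = σ0⁻¹ m <;>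
      by_cases hA2 : pr σ = pr σ0 <;> simp [hA1, hA2]
  have hA2 : ∑ σ ∈ univ.filter (fun σ : Equiv.Perm (Fin n) =>
      (∀ m ∈ univ \ ({i, j} : Finset (Fin n)), σ⁻¹ m = σ0⁻¹ m) ∧ pr σ = pr σ0),
      c σ = 0 := by
    rw [← heq]
    convert hA
  have hclass : univ.filter (fun σ : Equiv.Perm (Fin n) =>
      (∀ m ∈ univ \ ({i, j} : Finset (Fin n)), σ⁻¹ m = σ0⁻¹ m) ∧ pr σ = pr σ0)
      = {σ0, Equiv.swap i j * σ0} := by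
    ext σ
    simp only [Finset.mem_filter, Finset.mem_univ, true_and, Finset.mem_insert,
      Finset.mem_singleton, Finset.mem_sdiff]
    constructor
    · rintro ⟨hag, hp⟩
      rcases prinj σ σ0 hp with ⟨e1, e2⟩ | ⟨e1, e2⟩
      · left
        apply inv_injective
        apply Equiv.ext
        intro m
        by_cases hmi : m = i
        · subst hmi; exact e1
        by_cases hmj : m = j
        · subst hmj; exact e2
        · exact hag m (by simp [Finset.mem_insert, hmi, hmj])
      · right
        apply inv_injective
        apply Equiv.ext
        intro m
        rw [mul_inv_rev, Equiv.swap_inv, Equiv.Perm.mul_apply]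
        by_cases hmi : m = i
        · subst hmi; rw [Equiv.swap_apply_left]; exact e1
        by_cases hmj : m = j
        · subst hmj; rw [Equiv.swap_apply_right]; exact e2
        · rw [Equiv.swap_apply_of_ne_of_ne hmi hmj]
          exact hag m (by simp [Finset.mem_insert, hmi, hmj])
    · rintro (rfl | rfl)
      · exact ⟨fun m _ => rfl, rfl⟩
      · constructor
        · intro m hm
          rw [mul_inv_rev, Equiv.swap_inv, Equiv.Perm.mul_apply,
            Equiv.swap_apply_of_ne_of_ne (fun h => hm (Or.inl h)) (fun h => hm (Or.inr h))]
        · apply prswap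
          · rw [mul_inv_rev, Equiv.swap_inv, Equiv.Perm.mul_apply, Equiv.swap_apply_left]
          · rw [mul_inv_rev, Equiv.swap_inv, Equiv.Perm.mul_apply, Equiv.swap_apply_right]
  rw [hclass] at hA2
  have hne2 : σ0 ≠ Equiv.swap i j * σ0 := by
    intro h
    have := congrArg (fun σ : Equiv.Perm (Fin n) => σ (σ0⁻¹ i)) h
    simp only [Equiv.Perm.mul_apply, Equiv.Perm.inv_def, Equiv.apply_symm_apply] at this
    rw [Equiv.swap_apply_left] at this
    exact hij this
  rw [Finset.sum_pair hne2] at hA2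
  linear_combination hA2
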